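/- Let X and A be nonempty finite sets, let P : X × A → (X → ℝ) be a transition kernel (P(x'|x,a) ≥ 0 and Σ_{x'} P(x'|x,a) = 1), and let r : X × A → ℝ with 0 ≤ r(x,a) ≤ 1. Let π and π' be policies with induced transition matrices P^π, P^{π'} and induced rewards r_π, r_{π'}. Let τ ≥ 1 and suppose both P^π and P^{π'} satisfy the contraction condition: for any two probability distributions μ, μ' on X, the ℓ1-distance between μP^π and μ'P^π (respectively for P^{π'}) is at most exp(−1/τ) times the ℓ1-distance between μ and μ'. Let μ_π, μ_{π'} be stationary distributions of P^π, P^{π'}, set λ_π = Σ_x μ_π(x)·r_π(x), λ_{π'} = Σ_x μ_{π'}(x)·r_{π'}(x), define V_π(x) = Σ_{t=0}^∞ (((P^π)^t r_π)(x) − λ_π) and V_{π'}(x) = Σ_{t=0}^∞ (((P^{π'})^t r_{π'})(x) − λ_{π'}), and define Q_π(x,a) = r(x,a) − λ_π + Σ_{x'} P(x'|x,a)·V_π(x') and Q_{π'}(x,a) = r(x,a) − λ_{π'} + Σ_{x'} P(x'|x,a)·V_{π'}(x'). Let K be an integer with K ≥ 6τ, set N = ⌈4τ·log₂ K⌉ and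 Δ = max_{x∈X} Σ_{a∈A} |π(a|x) − π'(a|x)|. Then for every state-action pair (x, a): |Q_π(x,a) − Q_{π'}(x,a)| ≤ (N² + N + (2τ+3)(N+1))·Δ + 2/K³. -/

import Mathlib

open Finset

lemma centering_aux {X : Type*} [Fintype X] (c f : X → ℝ)
    (hc : ∑ x, c x = 0) (hf0 : ∀ x, 0 ≤ f x) (hf1 : ∀ x, f x ≤ 1) :
    |∑ x, c x * f x| ≤ (∑ x, |c x|) / 2 := by
  have h1 : ∑ x, c x * f x = ∑ x, c x * (f x - 1/2) := by
    simp [mul_sub, Finset.sum_sub_distrib, ← Finset.sum_mul, hc]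
  rw [h1]
  calc |∑ x, c x * (f x - 1/2)| ≤ ∑ x, |c x * (f x - 1/2)| :=
        Finset.abs_sum_le_sum_abs _ _
    _ ≤ ∑ x, |c x| * (1/2) := by
        refine Finset.sum_le_sum fun x _ => ?_
        rw [abs_mul]
        refine mul_le_mul_of_nonneg_left ?_ (abs_nonneg _)
        rw [abs_le]; constructor <;> [linarith [hf0 x]; linarith [hf1 x]]
    _ = (∑ x, |c x|) / 2 := by rw [← Finset.sum_mul]; ring

lemma pow_stoch {X : Type*} [Fintype X] [DecidableEq X] (M : Matrix X X ℝ)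
    (hnn : ∀ x y, 0 ≤ M x y) (hs : ∀ x, ∑ y, M x y = 1) (t : ℕ) :
    (∀ x y, 0 ≤ (M ^ t) x y) ∧ (∀ x, ∑ y, (M ^ t) x y = 1) := by
  induction t with
  | zero =>
    constructor
    · intro x y; simp [Matrix.one_apply]; positivity
    · intro x; simp [Matrix.one_apply]
  | succ t ih =>
    rw [pow_succ]
    constructor
    · intro x y
      rw [Matrix.mul_apply]
      exact Finset.sum_nonneg fun z _ => mul_nonneg (ih.1 x z) (hnn z y)
    · intro x
      simp only [Matrix.mul_apply]
      rw [Finset.sum_comm]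
      simp only [← Finset.mul_sum, hs, mul_one]
      exact ih.2 x

lemma contract_iter {X : Type*} [Fintype X] [DecidableEq X] (M : Matrix X X ℝ)
    (hnn : ∀ x y, 0 ≤ M x y) (hs : ∀ x, ∑ y, M x y = 1)
    (q : ℝ) (hq : 0 ≤ q)
    (hc : ∀ μ μ' : X → ℝ, (∀ x, 0 ≤ μ x) → (∑ x, μ x = 1) →
      (∀ x, 0 ≤ μ' x) → (∑ x, μ' x = 1) →
      ∑ x', |∑ x, (μ x - μ' x) * M x x'| ≤ q * ∑ x, |μ x - μ' x|)
    (t : ℕ) (μ μ' : X → ℝ) (hμ0 : ∀ x, 0 ≤ μ x) (hμ1 : ∑ x, μ x = 1)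
    (hμ'0 : ∀ x, 0 ≤ μ' x) (hμ'1 : ∑ x, μ' x = 1) :
    ∑ x', |∑ x, (μ x - μ' x) * (M ^ t) x x'| ≤ q ^ t * ∑ x, |μ x - μ' x| := by
  induction t with
  | zero =>
    simp [Matrix.one_apply, sub_mul]
  | succ t ih =>
    set ν : X → ℝ := fun y => ∑ x, μ x * (M ^ t) x y with hν
    set ν' : X → ℝ := fun y => ∑ x, μ' x * (M ^ t) x y with hν'
    have hpt := pow_stoch M hnn hs t
    have hν0 : ∀ y, 0 ≤ ν y := fun y =>
      Finset.sum_nonneg fun x _ => mul_nonneg (hμ0 x) (hpt.1 x y)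
    have hν1 : ∑ y, ν y = 1 := by
      rw [Finset.sum_comm]
      simp only [← Finset.mul_sum]
      simp only [hpt.2]
      simpa using hμ1
    have hν'0 : ∀ y, 0 ≤ ν' y := fun y =>
      Finset.sum_nonneg fun x _ => mul_nonneg (hμ'0 x) (hpt.1 x y)
    have hν'1 : ∑ y, ν' y = 1 := by
      rw [Finset.sum_comm]
      simp only [← Finset.mul_sum]
      simp only [hpt.2]
      simpa using hμ'1
    have key : ∀ x', ∑ x, (μ x - μ' x) * (M ^ (t+1)) x x'
        = ∑ y, (ν y - ν' y) * M y x' := by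
      intro x'
      rw [pow_succ]
      simp only [Matrix.mul_apply, Finset.mul_sum, hν, hν']
      rw [Finset.sum_comm]
      congr 1; ext y
      simp only [sub_mul, Finset.sum_sub_distrib, Finset.sum_mul]
      ring_nf
      rw [Finset.sum_congr rfl fun x _ => (by ring : μ x * (M ^ t) x y * M y x' = M y x' * μ x * (M ^ t) x y)]
      ring
    calc ∑ x', |∑ x, (μ x - μ' x) * (M ^ (t+1)) x x'|
        = ∑ x', |∑ y, (ν y - ν' y) * M y x'| := by simp only [key]
      _ ≤ q * ∑ y, |ν y - ν' y| := hc ν ν' hν0 hν1 hν'0 hν'1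
      _ = q * ∑ y, |∑ x, (μ x - μ' x) * (M ^ t) x y| := by
          congr 1; apply Finset.sum_congr rfl; intro y _
          congr 1
          simp [hν, hν', sub_mul, Finset.sum_sub_distrib]
      _ ≤ q * (q ^ t * ∑ x, |μ x - μ' x|) :=
          mul_le_mul_of_nonneg_left ih hq
      _ = q ^ (t+1) * ∑ x, |μ x - μ' x| := by ring

set_option maxHeartbeats 4000000 in
/-- Relative Q-function error lemma: the change in state-action value functions
of two policies of a uniformly fast-mixing average-reward MDP is controlled by
the maximal per-state ℓ1-distance Δ between the policies. -/
theorem stmt12 (X A : Type*) [Fintype X] [DecidableEq X] [Fintype A]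
    [Nonempty X] [Nonempty A]
    -- transition kernel
    (P : X → A → X → ℝ)
    (hPnn : ∀ x a x', 0 ≤ P x a x') (hPsum : ∀ x a, ∑ x', P x a x' = 1)
    -- reward in [0,1]
    (r : X → A → ℝ) (hr0 : ∀ x a, 0 ≤ r x a) (hr1 : ∀ x a, r x a ≤ 1)
    -- policies π and π'
    (π π' : X → A → ℝ)
    (hπnn : ∀ x a, 0 ≤ π x a) (hπsum : ∀ x, ∑ a, π x a = 1)
    (hπ'nn : ∀ x a, 0 ≤ π' x a) (hπ'sum : ∀ x, ∑ a, π' x a = 1)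
    -- induced transition matrices and rewards
    (Pπ Pπ' : Matrix X X ℝ)
    (hPπ : ∀ x x', Pπ x x' = ∑ a, π x a * P x a x')
    (hPπ' : ∀ x x', Pπ' x x' = ∑ a, π' x a * P x a x')
    (rπ rπ' : X → ℝ)
    (hrπ : ∀ x, rπ x = ∑ a, π x a * r x a)
    (hrπ' : ∀ x, rπ' x = ∑ a, π' x a * r x a)
    -- contraction condition with parameter τ for both chains
    (τ : ℝ) (hτ : 1 ≤ τ)
    (hcontr : ∀ μ μ' : X → ℝ, (∀ x, 0 ≤ μ x) → (∑ x, μ x = 1) →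
      (∀ x, 0 ≤ μ' x) → (∑ x, μ' x = 1) →
      ∑ x', |∑ x, (μ x - μ' x) * Pπ x x'| ≤ Real.exp (-1 / τ) * ∑ x, |μ x - μ' x|)
    (hcontr' : ∀ μ μ' : X → ℝ, (∀ x, 0 ≤ μ x) → (∑ x, μ x = 1) →
      (∀ x, 0 ≤ μ' x) → (∑ x, μ' x = 1) →
      ∑ x', |∑ x, (μ x - μ' x) * Pπ' x x'| ≤ Real.exp (-1 / τ) * ∑ x, |μ x - μ' x|)
    -- stationary distributions and average rewards
    (μπ μπ' : X → ℝ)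
    (hμnn : ∀ x, 0 ≤ μπ x) (hμsum : ∑ x, μπ x = 1)
    (hstat : ∀ x', ∑ x, μπ x * Pπ x x' = μπ x')
    (hμ'nn : ∀ x, 0 ≤ μπ' x) (hμ'sum : ∑ x, μπ' x = 1)
    (hstat' : ∀ x', ∑ x, μπ' x * Pπ' x x' = μπ' x')
    (lam lam' : ℝ)
    (hlam : lam = ∑ x, μπ x * rπ x) (hlam' : lam' = ∑ x, μπ' x * rπ' x)
    -- state value functions
    (V V' : X → ℝ)
    (hV : ∀ x, V x = ∑' t : ℕ, ((Pπ ^ t).mulVec rπ x - lam))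
    (hV' : ∀ x, V' x = ∑' t : ℕ, ((Pπ' ^ t).mulVec rπ' x - lam'))
    -- state-action value functions
    (Q Q' : X → A → ℝ)
    (hQ : ∀ x a, Q x a = r x a - lam + ∑ x', P x a x' * V x')
    (hQ' : ∀ x a, Q' x a = r x a - lam' + ∑ x', P x a x' * V' x')
    -- truncation horizon and policy distance
    (K : ℕ) (hK : 6 * τ ≤ (K : ℝ))
    (N : ℕ) (hN : N = ⌈4 * τ * Real.logb 2 (K : ℝ)⌉₊)
    (Δ : ℝ)
    (hΔ : Δ = Finset.univ.sup' Finset.univ_nonempty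
      (fun x : X => ∑ a, |π x a - π' x a|)) :
    ∀ (x : X) (a : A), |Q x a - Q' x a|
      ≤ ((N : ℝ) ^ 2 + (N : ℝ) + (2 * τ + 3) * ((N : ℝ) + 1)) * Δ
        + 2 / (K : ℝ) ^ 3 := by
  have hτ0 : (0:ℝ) < τ := lt_of_lt_of_le one_pos hτ
  set q : ℝ := Real.exp (-1 / τ) with hqdef
  have hq0 : 0 < q := Real.exp_pos _
  have hq1 : q < 1 := by
    rw [hqdef]
    apply Real.exp_lt_one_iff.mpr
    apply div_neg_of_neg_of_pos (by norm_num) hτ0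
  -- q(τ+1) ≤ τ, hence (1-q)(τ+1) ≥ 1
  have hE := Real.exp_pos (1/τ)
  have he : 1/τ + 1 ≤ Real.exp (1/τ) := Real.add_one_le_exp _
  have hqinv : q = (Real.exp (1/τ))⁻¹ := by
    rw [hqdef, ← Real.exp_neg]; congr 1; ring
  have h1' : τ + 1 ≤ τ * Real.exp (1/τ) := by
    have h1 : τ * (1/τ + 1) ≤ τ * Real.exp (1/τ) :=
      mul_le_mul_of_nonneg_left he hτ0.le
    have h2 : τ * (1/τ + 1) = 1 + τ := by field_simp
    linarith
  have hq_tau : q * (τ + 1) ≤ τ := by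
    rw [hqinv, inv_mul_le_iff₀ hE]
    nlinarith [h1']
  have h1mq : 1 ≤ (1 - q) * (τ + 1) := by nlinarith [hq_tau]
  have h1q : 0 < 1 - q := by linarith
  -- Δ facts
  have hΔle : ∀ x, ∑ a, |π x a - π' x a| ≤ Δ := by
    intro x; rw [hΔ]
    exact Finset.le_sup' (fun x : X => ∑ a, |π x a - π' x a|) (Finset.mem_univ x)
  have hΔ0 : 0 ≤ Δ :=
    le_trans (Finset.sum_nonneg fun a _ => abs_nonneg _)
      (hΔle (Classical.arbitrary X))
  -- row stochasticity
  have hPπnn : ∀ x y, 0 ≤ Pπ x y := by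
    intro x y; rw [hPπ]
    exact Finset.sum_nonneg fun a _ => mul_nonneg (hπnn x a) (hPnn x a y)
  have hPπ'nn : ∀ x y, 0 ≤ Pπ' x y := by
    intro x y; rw [hPπ']
    exact Finset.sum_nonneg fun a _ => mul_nonneg (hπ'nn x a) (hPnn x a y)
  have hPπsum : ∀ x, ∑ y, Pπ x y = 1 := by
    intro x; simp only [hPπ]
    rw [Finset.sum_comm]
    simp only [← Finset.mul_sum, hPsum, mul_one]
    exact hπsum x
  have hPπ'sum : ∀ x, ∑ y, Pπ' x y = 1 := by
    intro x; simp only [hPπ']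
    rw [Finset.sum_comm]
    simp only [← Finset.mul_sum, hPsum, mul_one]
    exact hπ'sum x
  -- rπ in [0,1]
  have hrπ0 : ∀ x, 0 ≤ rπ x := by
    intro x; rw [hrπ]
    exact Finset.sum_nonneg fun a _ => mul_nonneg (hπnn x a) (hr0 x a)
  have hrπ1 : ∀ x, rπ x ≤ 1 := by
    intro x; rw [hrπ]
    calc ∑ a, π x a * r x a ≤ ∑ a, π x a := by
          refine Finset.sum_le_sum fun a _ => ?_
          nlinarith [hπnn x a, hr1 x a]
      _ = 1 := hπsum x
  have hrπ'0 : ∀ x, 0 ≤ rπ' x := by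
    intro x; rw [hrπ']
    exact Finset.sum_nonneg fun a _ => mul_nonneg (hπ'nn x a) (hr0 x a)
  have hrπ'1 : ∀ x, rπ' x ≤ 1 := by
    intro x; rw [hrπ']
    calc ∑ a, π' x a * r x a ≤ ∑ a, π' x a := by
          refine Finset.sum_le_sum fun a _ => ?_
          nlinarith [hπ'nn x a, hr1 x a]
      _ = 1 := hπ'sum x
  -- value iterates
  set f : ℕ → X → ℝ := fun t => (Pπ ^ t).mulVec rπ with hfdef
  set f' : ℕ → X → ℝ := fun t => (Pπ' ^ t).mulVec rπ' with hf'def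
  have hf_apply : ∀ t x, f t x = ∑ y, (Pπ ^ t) x y * rπ y := by
    intro t x; simp [hfdef, Matrix.mulVec, dotProduct]
  have hf'_apply : ∀ t x, f' t x = ∑ y, (Pπ' ^ t) x y * rπ' y := by
    intro t x; simp [hf'def, Matrix.mulVec, dotProduct]
  have hfbnd : ∀ t x, 0 ≤ f t x ∧ f t x ≤ 1 := by
    intro t x
    have hpt := pow_stoch Pπ hPπnn hPπsum t
    constructor
    · rw [hf_apply]
      exact Finset.sum_nonneg fun y _ => mul_nonneg (hpt.1 x y) (hrπ0 y)
    · rw [hf_apply]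
      calc ∑ y, (Pπ ^ t) x y * rπ y ≤ ∑ y, (Pπ ^ t) x y := by
            refine Finset.sum_le_sum fun y _ => ?_
            nlinarith [hpt.1 x y, hrπ1 y]
        _ = 1 := hpt.2 x
  have hf'bnd : ∀ t x, 0 ≤ f' t x ∧ f' t x ≤ 1 := by
    intro t x
    have hpt := pow_stoch Pπ' hPπ'nn hPπ'sum t
    constructor
    · rw [hf'_apply]
      exact Finset.sum_nonneg fun y _ => mul_nonneg (hpt.1 x y) (hrπ'0 y)
    · rw [hf'_apply]
      calc ∑ y, (Pπ' ^ t) x y * rπ' y ≤ ∑ y, (Pπ' ^ t) x y := by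
            refine Finset.sum_le_sum fun y _ => ?_
            nlinarith [hpt.1 x y, hrπ'1 y]
        _ = 1 := hpt.2 x
  -- stationary iterates
  have hstat_t : ∀ (t : ℕ) (x' : X), ∑ x, μπ x * (Pπ ^ t) x x' = μπ x' := by
    intro t
    induction t with
    | zero => intro x'; simp [Matrix.one_apply, mul_ite]
    | succ t ih =>
      intro x'
      rw [pow_succ]
      simp only [Matrix.mul_apply, Finset.mul_sum]
      rw [Finset.sum_comm]
      have hy : ∀ y, ∑ x, μπ x * ((Pπ ^ t) x y * Pπ y x') = μπ y * Pπ y x' := by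
        intro y
        simp only [← mul_assoc]
        rw [← Finset.sum_mul, ih y]
      simp only [hy]
      exact hstat x'
  have hstat'_t : ∀ (t : ℕ) (x' : X), ∑ x, μπ' x * (Pπ' ^ t) x x' = μπ' x' := by
    intro t
    induction t with
    | zero => intro x'; simp [Matrix.one_apply, mul_ite]
    | succ t ih =>
      intro x'
      rw [pow_succ]
      simp only [Matrix.mul_apply, Finset.mul_sum]
      rw [Finset.sum_comm]
      have hy : ∀ y, ∑ x, μπ' x * ((Pπ' ^ t) x y * Pπ' y x') = μπ' y * Pπ' y x' := by
        intro y
        simp only [← mul_assoc]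
        rw [← Finset.sum_mul, ih y]
      simp only [hy]
      exact hstat' x'
  -- geometric decay of centered iterates
  have hg : ∀ t x, |f t x - lam| ≤ q ^ t := by
    intro t x
    set δ : X → ℝ := fun y => if y = x then 1 else 0 with hδdef
    have hδ0 : ∀ y, 0 ≤ δ y := by
      intro y; simp only [hδdef]; split <;> norm_num
    have hδ1 : ∑ y, δ y = 1 := by simp [hδdef]
    have hδx : ∀ x', ∑ y, δ y * (Pπ ^ t) y x' = (Pπ ^ t) x x' := by
      intro x'; simp [hδdef, ite_mul]
    have hrepr : f t x - lam = ∑ x', (∑ y, (δ y - μπ y) * (Pπ ^ t) y x') * rπ x' := by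
      rw [hf_apply, hlam]
      have : ∀ x', (∑ y, (δ y - μπ y) * (Pπ ^ t) y x') = (Pπ ^ t) x x' - μπ x' := by
        intro x'
        simp only [sub_mul, Finset.sum_sub_distrib, hδx x', hstat_t t x']
      simp only [this, sub_mul, Finset.sum_sub_distrib, hδx, hstat_t]
    rw [hrepr]
    have hcsum : ∑ x', (∑ y, (δ y - μπ y) * (Pπ ^ t) y x') = 0 := by
      rw [Finset.sum_comm]
      simp only [← Finset.mul_sum, (pow_stoch Pπ hPπnn hPπsum t).2, mul_one]
      rw [Finset.sum_sub_distrib, hδ1, hμsum]; ring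
    have hcent := centering_aux _ rπ hcsum hrπ0 hrπ1
    have hcontr_t := contract_iter Pπ hPπnn hPπsum q hq0.le hcontr t δ μπ
      hδ0 hδ1 hμnn hμsum
    have hl1 : ∑ y, |δ y - μπ y| ≤ 2 := by
      calc ∑ y, |δ y - μπ y| ≤ ∑ y, (δ y + μπ y) := by
            refine Finset.sum_le_sum fun y _ => ?_
            rw [abs_le]
            constructor <;> [linarith [hδ0 y, hμnn y]; linarith [hδ0 y, hμnn y]]
        _ = 2 := by rw [Finset.sum_add_distrib, hδ1, hμsum]; norm_num
    calc |∑ x', (∑ y, (δ y - μπ y) * (Pπ ^ t) y x') * rπ x'|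
        ≤ (∑ x', |∑ y, (δ y - μπ y) * (Pπ ^ t) y x'|) / 2 := hcent
      _ ≤ (q ^ t * ∑ y, |δ y - μπ y|) / 2 := by linarith [hcontr_t]
      _ ≤ (q ^ t * 2) / 2 := by
          have := mul_le_mul_of_nonneg_left hl1 (pow_nonneg hq0.le t)
          linarith
      _ = q ^ t := by ring
  have hg' : ∀ t x, |f' t x - lam'| ≤ q ^ t := by
    intro t x
    set δ : X → ℝ := fun y => if y = x then 1 else 0 with hδdef
    have hδ0 : ∀ y, 0 ≤ δ y := by
      intro y; simp only [hδdef]; split <;> norm_num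
    have hδ1 : ∑ y, δ y = 1 := by simp [hδdef]
    have hδx : ∀ x', ∑ y, δ y * (Pπ' ^ t) y x' = (Pπ' ^ t) x x' := by
      intro x'; simp [hδdef, ite_mul]
    have hrepr : f' t x - lam' = ∑ x', (∑ y, (δ y - μπ' y) * (Pπ' ^ t) y x') * rπ' x' := by
      rw [hf'_apply, hlam']
      have : ∀ x', (∑ y, (δ y - μπ' y) * (Pπ' ^ t) y x') = (Pπ' ^ t) x x' - μπ' x' := by
        intro x'
        simp only [sub_mul, Finset.sum_sub_distrib, hδx x', hstat'_t t x']
      simp only [this, sub_mul, Finset.sum_sub_distrib, hδx, hstat'_t]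
    rw [hrepr]
    have hcsum : ∑ x', (∑ y, (δ y - μπ' y) * (Pπ' ^ t) y x') = 0 := by
      rw [Finset.sum_comm]
      simp only [← Finset.mul_sum, (pow_stoch Pπ' hPπ'nn hPπ'sum t).2, mul_one]
      rw [Finset.sum_sub_distrib, hδ1, hμ'sum]; ring
    have hcent := centering_aux _ rπ' hcsum hrπ'0 hrπ'1
    have hcontr_t := contract_iter Pπ' hPπ'nn hPπ'sum q hq0.le hcontr' t δ μπ'
      hδ0 hδ1 hμ'nn hμ'sum
    have hl1 : ∑ y, |δ y - μπ' y| ≤ 2 := by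
      calc ∑ y, |δ y - μπ' y| ≤ ∑ y, (δ y + μπ' y) := by
            refine Finset.sum_le_sum fun y _ => ?_
            rw [abs_le]
            constructor <;> [linarith [hδ0 y, hμ'nn y]; linarith [hδ0 y, hμ'nn y]]
        _ = 2 := by rw [Finset.sum_add_distrib, hδ1, hμ'sum]; norm_num
    calc |∑ x', (∑ y, (δ y - μπ' y) * (Pπ' ^ t) y x') * rπ' x'|
        ≤ (∑ x', |∑ y, (δ y - μπ' y) * (Pπ' ^ t) y x'|) / 2 := hcent
      _ ≤ (q ^ t * ∑ y, |δ y - μπ' y|) / 2 := by linarith [hcontr_t]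
      _ ≤ (q ^ t * 2) / 2 := by
          have := mul_le_mul_of_nonneg_left hl1 (pow_nonneg hq0.le t)
          linarith
      _ = q ^ t := by ring
  -- summability
  have hqsum : Summable (fun t : ℕ => q ^ t) :=
    summable_geometric_of_lt_one hq0.le hq1
  have hsumm : ∀ x, Summable (fun t => f t x - lam) := by
    intro x
    apply Summable.of_norm_bounded hqsum
    intro t
    simpa [Real.norm_eq_abs] using hg t x
  have hsumm' : ∀ x, Summable (fun t => f' t x - lam') := by
    intro x
    apply Summable.of_norm_bounded hqsum
    intro t
    simpa [Real.norm_eq_abs] using hg' t x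
  -- row l1 distance
  have hrowdiff : ∀ x, ∑ y, |Pπ x y - Pπ' x y| ≤ Δ := by
    intro x
    calc ∑ y, |Pπ x y - Pπ' x y|
        = ∑ y, |∑ a, (π x a - π' x a) * P x a y| := by
          simp [hPπ, hPπ', sub_mul, Finset.sum_sub_distrib]
      _ ≤ ∑ y, ∑ a, |π x a - π' x a| * P x a y := by
          refine Finset.sum_le_sum fun y _ => ?_
          refine le_trans (Finset.abs_sum_le_sum_abs _ _) ?_
          refine Finset.sum_le_sum fun a _ => ?_
          rw [abs_mul, abs_of_nonneg (hPnn x a y)]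
      _ = ∑ a, |π x a - π' x a| * ∑ y, P x a y := by
          rw [Finset.sum_comm]
          simp [Finset.mul_sum]
      _ = ∑ a, |π x a - π' x a| := by simp [hPsum]
      _ ≤ Δ := hΔle x
  -- reward difference
  have hrdiff : ∀ x, |rπ x - rπ' x| ≤ Δ / 2 := by
    intro x
    have heq : rπ x - rπ' x = ∑ a, (π x a - π' x a) * r x a := by
      rw [hrπ, hrπ']
      simp [sub_mul, Finset.sum_sub_distrib]
    rw [heq]
    have hc0 : ∑ a, (π x a - π' x a) = 0 := by
      rw [Finset.sum_sub_distrib, hπsum, hπ'sum]; ring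
    refine le_trans (centering_aux _ (r x) hc0 (hr0 x) (hr1 x)) ?_
    linarith [hΔle x]
  -- head difference
  have hfd : ∀ t x, |f t x - f' t x| ≤ ((t:ℝ) + 1) * (Δ / 2) := by
    intro t
    induction t with
    | zero =>
      intro x
      have h0 : f 0 x = rπ x := by
        rw [hf_apply]; simp [Matrix.one_apply, ite_mul]
      have h0' : f' 0 x = rπ' x := by
        rw [hf'_apply]; simp [Matrix.one_apply, ite_mul]
      rw [h0, h0']
      simpa using hrdiff x
    | succ t ih =>
      intro x
      have hsucc : f (t+1) x = ∑ y, Pπ x y * f t y := by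
        simp only [hf_apply, pow_succ', Matrix.mul_apply, Finset.sum_mul]
        rw [Finset.sum_comm]
        simp only [Finset.mul_sum, mul_assoc]
      have hsucc' : f' (t+1) x = ∑ y, Pπ' x y * f' t y := by
        simp only [hf'_apply, pow_succ', Matrix.mul_apply, Finset.sum_mul]
        rw [Finset.sum_comm]
        simp only [Finset.mul_sum, mul_assoc]
      have hsplit : f (t+1) x - f' (t+1) x
          = (∑ y, Pπ x y * (f t y - f' t y)) + ∑ y, (Pπ x y - Pπ' x y) * f' t y := by
        rw [hsucc, hsucc']
        simp only [mul_sub, sub_mul, Finset.sum_sub_distrib]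
        ring
      rw [hsplit]
      have hA : |∑ y, Pπ x y * (f t y - f' t y)| ≤ ((t:ℝ) + 1) * (Δ / 2) := by
        calc |∑ y, Pπ x y * (f t y - f' t y)|
            ≤ ∑ y, |Pπ x y * (f t y - f' t y)| := Finset.abs_sum_le_sum_abs _ _
          _ ≤ ∑ y, Pπ x y * (((t:ℝ) + 1) * (Δ / 2)) := by
              refine Finset.sum_le_sum fun y _ => ?_
              rw [abs_mul, abs_of_nonneg (hPπnn x y)]
              exact mul_le_mul_of_nonneg_left (ih y) (hPπnn x y)
          _ = ((t:ℝ) + 1) * (Δ / 2) := by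
              rw [← Finset.sum_mul, hPπsum, one_mul]
      have hB : |∑ y, (Pπ x y - Pπ' x y) * f' t y| ≤ Δ / 2 := by
        have hc0 : ∑ y, (Pπ x y - Pπ' x y) = 0 := by
          rw [Finset.sum_sub_distrib, hPπsum, hPπ'sum]; ring
        refine le_trans (centering_aux _ (f' t) hc0
          (fun y => (hf'bnd t y).1) (fun y => (hf'bnd t y).2)) ?_
        linarith [hrowdiff x]
      calc |(∑ y, Pπ x y * (f t y - f' t y)) + ∑ y, (Pπ x y - Pπ' x y) * f' t y|
          ≤ |∑ y, Pπ x y * (f t y - f' t y)| + |∑ y, (Pπ x y - Pπ' x y) * f' t y| :=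
            abs_add_le _ _
        _ ≤ ((t:ℝ) + 1) * (Δ / 2) + Δ / 2 := add_le_add hA hB
        _ = ((((t+1 : ℕ)):ℝ) + 1) * (Δ / 2) := by push_cast; ring
  -- stationary distribution distance
  have hS : ∑ y, |μπ y - μπ' y| ≤ (τ + 1) * Δ := by
    have hS0 : 0 ≤ ∑ y, |μπ y - μπ' y| := Finset.sum_nonneg fun _ _ => abs_nonneg _
    have hdecomp : ∀ x', μπ x' - μπ' x'
        = (∑ x, (μπ x - μπ' x) * Pπ x x') + ∑ x, μπ' x * (Pπ x x' - Pπ' x x') := by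
      intro x'
      conv_lhs => rw [← hstat x', ← hstat' x']
      simp only [sub_mul, mul_sub, Finset.sum_sub_distrib]
      ring
    have hsecond : ∑ x', |∑ x, μπ' x * (Pπ x x' - Pπ' x x')| ≤ Δ := by
      calc ∑ x', |∑ x, μπ' x * (Pπ x x' - Pπ' x x')|
          ≤ ∑ x', ∑ x, μπ' x * |Pπ x x' - Pπ' x x'| := by
            refine Finset.sum_le_sum fun x' _ => ?_
            refine le_trans (Finset.abs_sum_le_sum_abs _ _) ?_
            refine Finset.sum_le_sum fun x _ => ?_
            rw [abs_mul, abs_of_nonneg (hμ'nn x)]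
        _ = ∑ x, μπ' x * ∑ x', |Pπ x x' - Pπ' x x'| := by
            rw [Finset.sum_comm]
            simp [Finset.mul_sum]
        _ ≤ ∑ x, μπ' x * Δ := by
            refine Finset.sum_le_sum fun x _ => ?_
            exact mul_le_mul_of_nonneg_left (hrowdiff x) (hμ'nn x)
        _ = Δ := by rw [← Finset.sum_mul, hμ'sum, one_mul]
    have key : (∑ y, |μπ y - μπ' y|) ≤ q * (∑ y, |μπ y - μπ' y|) + Δ := by
      calc (∑ y, |μπ y - μπ' y|)
          = ∑ x', |(∑ x, (μπ x - μπ' x) * Pπ x x')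
            + ∑ x, μπ' x * (Pπ x x' - Pπ' x x')| :=
            Finset.sum_congr rfl fun x' _ => by rw [hdecomp x']
        _ ≤ ∑ x', (|∑ x, (μπ x - μπ' x) * Pπ x x'|
            + |∑ x, μπ' x * (Pπ x x' - Pπ' x x')|) :=
            Finset.sum_le_sum fun x' _ => abs_add_le _ _
        _ = (∑ x', |∑ x, (μπ x - μπ' x) * Pπ x x'|)
            + ∑ x', |∑ x, μπ' x * (Pπ x x' - Pπ' x x')| := Finset.sum_add_distrib
        _ ≤ q * (∑ y, |μπ y - μπ' y|) + Δ :=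
            add_le_add (hcontr μπ μπ' hμnn hμsum hμ'nn hμ'sum) hsecond
    have h2 : (∑ y, |μπ y - μπ' y|) * (1 - q) ≤ Δ := by nlinarith [key]
    calc (∑ y, |μπ y - μπ' y|) = (∑ y, |μπ y - μπ' y|) * 1 := by ring
      _ ≤ (∑ y, |μπ y - μπ' y|) * ((1 - q) * (τ + 1)) :=
          mul_le_mul_of_nonneg_left h1mq hS0
      _ = ((∑ y, |μπ y - μπ' y|) * (1 - q)) * (τ + 1) := by ring
      _ ≤ Δ * (τ + 1) := mul_le_mul_of_nonneg_right h2 (by linarith)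
      _ = (τ + 1) * Δ := by ring
  -- average reward distance
  have hL : |lam - lam'| ≤ (τ + 2) * (Δ / 2) := by
    have hd : lam - lam' = (∑ x, (μπ x - μπ' x) * rπ x)
        + ∑ x, μπ' x * (rπ x - rπ' x) := by
      rw [hlam, hlam']
      simp only [sub_mul, mul_sub, Finset.sum_sub_distrib]
      ring
    have hc0 : ∑ x, (μπ x - μπ' x) = 0 := by
      rw [Finset.sum_sub_distrib, hμsum, hμ'sum]; ring
    have hfirst : |∑ x, (μπ x - μπ' x) * rπ x| ≤ (τ + 1) * Δ / 2 := by
      refine le_trans (centering_aux _ rπ hc0 hrπ0 hrπ1) ?_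
      linarith [hS]
    have hsecond : |∑ x, μπ' x * (rπ x - rπ' x)| ≤ Δ / 2 := by
      calc |∑ x, μπ' x * (rπ x - rπ' x)|
          ≤ ∑ x, |μπ' x * (rπ x - rπ' x)| := Finset.abs_sum_le_sum_abs _ _
        _ ≤ ∑ x, μπ' x * (Δ / 2) := by
            refine Finset.sum_le_sum fun x _ => ?_
            rw [abs_mul, abs_of_nonneg (hμ'nn x)]
            exact mul_le_mul_of_nonneg_left (hrdiff x) (hμ'nn x)
        _ = Δ / 2 := by rw [← Finset.sum_mul, hμ'sum, one_mul]
    calc |lam - lam'| = |(∑ x, (μπ x - μπ' x) * rπ x)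
        + ∑ x, μπ' x * (rπ x - rπ' x)| := by rw [hd]
      _ ≤ |∑ x, (μπ x - μπ' x) * rπ x| + |∑ x, μπ' x * (rπ x - rπ' x)| := abs_add_le _ _
      _ ≤ (τ + 1) * Δ / 2 + Δ / 2 := add_le_add hfirst hsecond
      _ = (τ + 2) * (Δ / 2) := by ring
  -- q^N ≤ 1/K^4
  have hK6 : (6:ℝ) ≤ (K:ℝ) := by linarith
  have hK1 : (1:ℝ) < (K:ℝ) := by linarith
  have hKpos : (0:ℝ) < (K:ℝ) := by linarith
  have hlogK : 0 < Real.log (K:ℝ) := Real.log_pos hK1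
  have hlog2pos : 0 < Real.log 2 := Real.log_pos one_lt_two
  have hlog2le : Real.log 2 ≤ 1 := by
    linarith [Real.log_two_lt_d9]
  have hlb : Real.log (K:ℝ) ≤ Real.logb 2 (K:ℝ) := by
    rw [Real.logb, le_div_iff₀ hlog2pos]
    nlinarith [hlogK, hlog2le]
  have hNge : 4 * τ * Real.log (K:ℝ) ≤ (N:ℝ) := by
    have h1 : 4 * τ * Real.log (K:ℝ) ≤ 4 * τ * Real.logb 2 (K:ℝ) := by
      have h4τ : 0 ≤ 4 * τ := by linarith
      nlinarith [hlb]
    have h2 : 4 * τ * Real.logb 2 (K:ℝ) ≤ (N:ℝ) := by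
      rw [hN]; exact Nat.le_ceil _
    linarith
  have hqK : q ^ N ≤ ((K:ℝ) ^ 4)⁻¹ := by
    have hqNval : q ^ N = Real.exp ((N:ℝ) * (-1 / τ)) := by
      rw [hqdef, ← Real.exp_nat_mul]
    have harg : (N:ℝ) * (-1 / τ) ≤ -(4 * Real.log (K:ℝ)) := by
      have h3 : 4 * Real.log (K:ℝ) ≤ (N:ℝ) / τ := by
        rw [le_div_iff₀ hτ0]
        nlinarith [hNge]
      have heq : (N:ℝ) * (-1 / τ) = -((N:ℝ) / τ) := by ring
      rw [heq]
      linarith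
    rw [hqNval]
    calc Real.exp ((N:ℝ) * (-1 / τ)) ≤ Real.exp (-(4 * Real.log (K:ℝ))) :=
          Real.exp_le_exp.mpr harg
      _ = ((K:ℝ) ^ 4)⁻¹ := by
          rw [Real.exp_neg]
          congr 1
          rw [show (4:ℝ) * Real.log (K:ℝ) = Real.log ((K:ℝ) ^ 4) by
            rw [Real.log_pow]; push_cast; ring]
          exact Real.exp_log (by positivity)
  -- tail bound
  have htail_bound : q ^ N * (1 - q)⁻¹ ≤ 1 / (K:ℝ) ^ 3 := by
    have hinv : (1 - q)⁻¹ ≤ τ + 1 := by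
      rw [inv_le_iff_one_le_mul₀ h1q]
      nlinarith [h1mq]
    have hτK : τ + 1 ≤ (K:ℝ) := by linarith
    calc q ^ N * (1 - q)⁻¹ ≤ q ^ N * (τ + 1) := by
          refine mul_le_mul_of_nonneg_left hinv (pow_nonneg hq0.le N)
      _ ≤ ((K:ℝ) ^ 4)⁻¹ * (τ + 1) := by
          refine mul_le_mul_of_nonneg_right hqK (by linarith)
      _ ≤ ((K:ℝ) ^ 4)⁻¹ * (K:ℝ) := by
          refine mul_le_mul_of_nonneg_left hτK (by positivity)
      _ = 1 / (K:ℝ) ^ 3 := by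
          field_simp
  have hgeo : ∑' t : ℕ, q ^ (t + N) = q ^ N * (1 - q)⁻¹ := by
    have : ∀ t : ℕ, q ^ (t + N) = q ^ N * q ^ t := by
      intro t; rw [pow_add]; ring
    rw [tsum_congr this, tsum_mul_left, tsum_geometric_of_lt_one hq0.le hq1]
  have htail : ∀ x, |∑' t : ℕ, (f (t + N) x - lam)| ≤ 1 / (K:ℝ) ^ 3 := by
    intro x
    have hs1 : Summable (fun t : ℕ => q ^ (t + N)) :=
      (summable_nat_add_iff N).mpr hqsum
    have habs : Summable (fun t : ℕ => |f (t + N) x - lam|) :=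
      Summable.of_nonneg_of_le (fun t => abs_nonneg _) (fun t => hg (t + N) x) hs1
    calc |∑' t : ℕ, (f (t + N) x - lam)|
        ≤ ∑' t : ℕ, q ^ (t + N) := by
          have h1 : |∑' t : ℕ, (f (t + N) x - lam)| ≤ ∑' t : ℕ, |f (t + N) x - lam| := by
            have := norm_tsum_le_tsum_norm (f := fun t : ℕ => f (t + N) x - lam)
              (by simpa [Real.norm_eq_abs] using habs)
            simpa [Real.norm_eq_abs] using this
          refine le_trans h1 ?_
          exact Summable.tsum_le_tsum (fun t => hg (t + N) x) habs hs1
      _ = q ^ N * (1 - q)⁻¹ := hgeo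
      _ ≤ 1 / (K:ℝ) ^ 3 := htail_bound
  have htail' : ∀ x, |∑' t : ℕ, (f' (t + N) x - lam')| ≤ 1 / (K:ℝ) ^ 3 := by
    intro x
    have hs1 : Summable (fun t : ℕ => q ^ (t + N)) :=
      (summable_nat_add_iff N).mpr hqsum
    have habs : Summable (fun t : ℕ => |f' (t + N) x - lam'|) :=
      Summable.of_nonneg_of_le (fun t => abs_nonneg _) (fun t => hg' (t + N) x) hs1
    calc |∑' t : ℕ, (f' (t + N) x - lam')|
        ≤ ∑' t : ℕ, q ^ (t + N) := by
          have h1 : |∑' t : ℕ, (f' (t + N) x - lam')| ≤ ∑' t : ℕ, |f' (t + N) x - lam'| := by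
            have := norm_tsum_le_tsum_norm (f := fun t : ℕ => f' (t + N) x - lam')
              (by simpa [Real.norm_eq_abs] using habs)
            simpa [Real.norm_eq_abs] using this
          refine le_trans h1 ?_
          exact Summable.tsum_le_tsum (fun t => hg' (t + N) x) habs hs1
      _ = q ^ N * (1 - q)⁻¹ := hgeo
      _ ≤ 1 / (K:ℝ) ^ 3 := htail_bound
  -- Gauss sum
  have hgauss' : ∀ n : ℕ, ∑ t ∈ Finset.range n, ((t:ℝ) + 1) = (n:ℝ) * ((n:ℝ) + 1) / 2 := by
    intro n
    induction n with
    | zero => simp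
    | succ n ih =>
      rw [Finset.sum_range_succ, ih]
      push_cast
      ring
  have hgauss : ∑ t ∈ Finset.range N, ((t:ℝ) + 1) = (N:ℝ) * ((N:ℝ) + 1) / 2 := hgauss' N
  -- V difference bound
  have hVd : ∀ x, |V x - V' x|
      ≤ (N:ℝ) * ((N:ℝ) + 1) / 2 * (Δ / 2) + (N:ℝ) * ((τ + 2) * (Δ / 2))
        + 2 / (K:ℝ) ^ 3 := by
    intro x
    have hsplitV : V x = (∑ t ∈ Finset.range N, (f t x - lam))
        + ∑' t : ℕ, (f (t + N) x - lam) := by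
      rw [hV x]
      exact (Summable.sum_add_tsum_nat_add N (hsumm x)).symm
    have hsplitV' : V' x = (∑ t ∈ Finset.range N, (f' t x - lam'))
        + ∑' t : ℕ, (f' (t + N) x - lam') := by
      rw [hV' x]
      exact (Summable.sum_add_tsum_nat_add N (hsumm' x)).symm
    have hhead : |∑ t ∈ Finset.range N, (f t x - lam)
        - ∑ t ∈ Finset.range N, (f' t x - lam')|
        ≤ (N:ℝ) * ((N:ℝ) + 1) / 2 * (Δ / 2) + (N:ℝ) * ((τ + 2) * (Δ / 2)) := by
      have heq : ∑ t ∈ Finset.range N, (f t x - lam)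
          - ∑ t ∈ Finset.range N, (f' t x - lam')
          = (∑ t ∈ Finset.range N, (f t x - f' t x)) + (N:ℝ) * (lam' - lam) := by
        rw [← Finset.sum_sub_distrib]
        rw [show (∑ t ∈ Finset.range N, (f t x - lam - (f' t x - lam')))
            = ∑ t ∈ Finset.range N, ((f t x - f' t x) + (lam' - lam)) by
          exact Finset.sum_congr rfl fun t _ => by ring]
        rw [Finset.sum_add_distrib, Finset.sum_const, Finset.card_range]
        push_cast
        ring
      rw [heq]
      have h1 : |∑ t ∈ Finset.range N, (f t x - f' t x)|
          ≤ (N:ℝ) * ((N:ℝ) + 1) / 2 * (Δ / 2) := by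
        calc |∑ t ∈ Finset.range N, (f t x - f' t x)|
            ≤ ∑ t ∈ Finset.range N, |f t x - f' t x| :=
              Finset.abs_sum_le_sum_abs _ _
          _ ≤ ∑ t ∈ Finset.range N, ((t:ℝ) + 1) * (Δ / 2) :=
              Finset.sum_le_sum fun t _ => hfd t x
          _ = (∑ t ∈ Finset.range N, ((t:ℝ) + 1)) * (Δ / 2) := by
              rw [← Finset.sum_mul]
          _ = (N:ℝ) * ((N:ℝ) + 1) / 2 * (Δ / 2) := by rw [hgauss]
      have h2 : |(N:ℝ) * (lam' - lam)| ≤ (N:ℝ) * ((τ + 2) * (Δ / 2)) := by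
        rw [abs_mul, abs_of_nonneg (Nat.cast_nonneg N), abs_sub_comm]
        exact mul_le_mul_of_nonneg_left hL (Nat.cast_nonneg N)
      calc |(∑ t ∈ Finset.range N, (f t x - f' t x)) + (N:ℝ) * (lam' - lam)|
          ≤ |∑ t ∈ Finset.range N, (f t x - f' t x)| + |(N:ℝ) * (lam' - lam)| :=
            abs_add_le _ _
        _ ≤ (N:ℝ) * ((N:ℝ) + 1) / 2 * (Δ / 2) + (N:ℝ) * ((τ + 2) * (Δ / 2)) :=
            add_le_add h1 h2
    calc |V x - V' x|
        = |(∑ t ∈ Finset.range N, (f t x - lam)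
            - ∑ t ∈ Finset.range N, (f' t x - lam'))
            + (∑' t : ℕ, (f (t + N) x - lam) - ∑' t : ℕ, (f' (t + N) x - lam'))| := by
          rw [hsplitV, hsplitV']
          congr 1
          ring
      _ ≤ |∑ t ∈ Finset.range N, (f t x - lam)
            - ∑ t ∈ Finset.range N, (f' t x - lam')|
          + |∑' t : ℕ, (f (t + N) x - lam) - ∑' t : ℕ, (f' (t + N) x - lam')| :=
          abs_add_le _ _
      _ ≤ ((N:ℝ) * ((N:ℝ) + 1) / 2 * (Δ / 2) + (N:ℝ) * ((τ + 2) * (Δ / 2)))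
          + (1 / (K:ℝ) ^ 3 + 1 / (K:ℝ) ^ 3) := by
          refine add_le_add hhead ?_
          refine le_trans (abs_sub _ _) (add_le_add (htail x) (htail' x))
      _ = (N:ℝ) * ((N:ℝ) + 1) / 2 * (Δ / 2) + (N:ℝ) * ((τ + 2) * (Δ / 2))
          + 2 / (K:ℝ) ^ 3 := by ring
  -- assemble
  intro x0 a0
  have hQd : Q x0 a0 - Q' x0 a0
      = (lam' - lam) + ∑ x', P x0 a0 x' * (V x' - V' x') := by
    rw [hQ, hQ']
    simp only [mul_sub, Finset.sum_sub_distrib]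
    ring
  set Bv : ℝ := (N:ℝ) * ((N:ℝ) + 1) / 2 * (Δ / 2) + (N:ℝ) * ((τ + 2) * (Δ / 2))
      + 2 / (K:ℝ) ^ 3 with hBv
  have hsum_bound : |∑ x', P x0 a0 x' * (V x' - V' x')| ≤ Bv := by
    calc |∑ x', P x0 a0 x' * (V x' - V' x')|
        ≤ ∑ x', |P x0 a0 x' * (V x' - V' x')| := Finset.abs_sum_le_sum_abs _ _
      _ ≤ ∑ x', P x0 a0 x' * Bv := by
          refine Finset.sum_le_sum fun x' _ => ?_
          rw [abs_mul, abs_of_nonneg (hPnn x0 a0 x')]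
          exact mul_le_mul_of_nonneg_left (hVd x') (hPnn x0 a0 x')
      _ = Bv := by rw [← Finset.sum_mul, hPsum, one_mul]
  have hfinal : |Q x0 a0 - Q' x0 a0| ≤ (τ + 2) * (Δ / 2) + Bv := by
    rw [hQd]
    calc |(lam' - lam) + ∑ x', P x0 a0 x' * (V x' - V' x')|
        ≤ |lam' - lam| + |∑ x', P x0 a0 x' * (V x' - V' x')| := abs_add_le _ _
      _ ≤ (τ + 2) * (Δ / 2) + Bv := by
          refine add_le_add ?_ hsum_bound
          rw [abs_sub_comm]
          exact hL
  refine le_trans hfinal ?_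
  rw [hBv]
  have hN0 : (0:ℝ) ≤ (N:ℝ) := Nat.cast_nonneg N
  nlinarith [mul_nonneg hΔ0 hN0, mul_nonneg (mul_nonneg hΔ0 hN0) hN0,
    mul_nonneg (mul_nonneg hΔ0 hτ0.le) hN0, mul_nonneg hΔ0 hτ0.le, hΔ0, hτ0.le]
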